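/- arXiv:1606.08764 — 3 statements merged into one kernel-verified Lean document; each statement's English description precedes it below -/
import Mathlib

section
/- With the setting of the Dimension Lemma, for every index i ∈ ℕ, W_{i+1} = span(K_{i+1} ∪ W_i), where K_{i+1} = U⁻¹(W_i) ∩ W⊥. -/
/-- In the setting of the Dimension Lemma (`V = ℂ^N`, `U` unitary, `W` a subspace,
`U_W = U ∘ P_{Wᗮ}`, `W_i = {w : U_W^(i+1) w = 0}`, `K_{i+1} = U⁻¹(W_i) ∩ Wᗮ`),
for every `i` we have `W_{i+1} = span (K_{i+1} ∪ W_i)`. -/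
theorem dimension_lemma_span_step (N : ℕ)
    (U : EuclideanSpace ℂ (Fin N) ≃ₗᵢ[ℂ] EuclideanSpace ℂ (Fin N))
    (W : Submodule ℂ (EuclideanSpace ℂ (Fin N)))
    (UW : Module.End ℂ (EuclideanSpace ℂ (Fin N)))
    (hUW : ∀ v, UW v = U ((Wᗮ.orthogonalProjectionOnto v : EuclideanSpace ℂ (Fin N))))
    (Wseq : ℕ → Submodule ℂ (EuclideanSpace ℂ (Fin N)))
    (hWseq : ∀ i w, w ∈ Wseq i ↔ (UW ^ (i + 1)) w = 0)
    (K : ℕ → Set (EuclideanSpace ℂ (Fin N)))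
    (hK : ∀ i, K (i + 1) = {x | x ∈ (Wᗮ : Set (EuclideanSpace ℂ (Fin N))) ∧ U x ∈ Wseq i}) :
    ∀ i : ℕ, (Wseq (i + 1) : Set (EuclideanSpace ℂ (Fin N)))
      = (Submodule.span ℂ (K (i + 1) ∪ (Wseq i : Set (EuclideanSpace ℂ (Fin N))))
          : Submodule ℂ (EuclideanSpace ℂ (Fin N))) := by
  intro i
  -- UW of an element of Wᗮᗮ is 0
  have hUWzero : ∀ v, v ∈ Wᗮᗮ → UW v = 0 := by
    intro v hv
    rw [hUW, Submodule.orthogonalProjectionOnto_apply_of_mem_orthogonal hv]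
    simp
  -- UW fixes the action on Wᗮ elements
  have hUWorth : ∀ v, v ∈ Wᗮ → UW v = U v := by
    intro v hv
    rw [hUW, Submodule.orthogonalProjectionOnto_mem_subspace_eq_self ⟨v, hv⟩]
  -- Wseq i ⊆ Wseq (i+1)
  have hmono : (Wseq i : Set (EuclideanSpace ℂ (Fin N))) ⊆ Wseq (i + 1) := by
    intro w hw
    rw [SetLike.mem_coe, hWseq] at hw ⊢
    rw [pow_succ', Module.End.mul_apply, hw, map_zero]
  apply le_antisymm
  · -- Wseq (i+1) ⊆ span
    intro w hw
    rw [SetLike.mem_coe, hWseq] at hw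
    set a : EuclideanSpace ℂ (Fin N) :=
      (Wᗮ.orthogonalProjectionOnto w : EuclideanSpace ℂ (Fin N)) with ha
    have hmemb : w - a ∈ Wᗮᗮ := Submodule.sub_starProjection_mem_orthogonal w
    have haW : a ∈ Wᗮ := (Wᗮ.orthogonalProjectionOnto w).2
    have hUWw : UW w = U a := hUW w
    have hUa : (UW ^ (i + 1)) (U a) = 0 := by
      have : (UW ^ (i + 1 + 1)) w = (UW ^ (i + 1)) (UW w) := by
        rw [pow_succ, Module.End.mul_apply]
      rw [this, hUWw] at hw
      exact hw
    have haK : a ∈ K (i + 1) := by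
      rw [hK]
      exact ⟨haW, (hWseq i (U a)).2 hUa⟩
    have hbW : w - a ∈ Wseq i := by
      rw [hWseq, pow_succ, Module.End.mul_apply, hUWzero _ hmemb, map_zero]
    have : w = a + (w - a) := by abel
    rw [SetLike.mem_coe, this]
    exact Submodule.add_mem _
      (Submodule.subset_span (Set.mem_union_left _ haK))
      (Submodule.subset_span (Set.mem_union_right _ hbW))
  · -- span ⊆ Wseq (i+1)
    have hKsub : K (i + 1) ⊆ (Wseq (i + 1) : Set (EuclideanSpace ℂ (Fin N))) := by
      intro x hx
      rw [hK] at hx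
      obtain ⟨hx1, hx2⟩ := hx
      rw [SetLike.mem_coe, hWseq]
      have : (UW ^ (i + 1 + 1)) x = (UW ^ (i + 1)) (UW x) := by
        rw [pow_succ, Module.End.mul_apply]
      rw [this, hUWorth x hx1]
      exact (hWseq i (U x)).1 hx2
    have h : Submodule.span ℂ (K (i + 1) ∪ (Wseq i : Set (EuclideanSpace ℂ (Fin N))))
        ≤ Wseq (i + 1) := Submodule.span_le.2 (Set.union_subset hKsub hmono)
    intro x hx
    exact h hx
end

section
/- Let V = ℂ^N be decomposed as an orthogonal direct sum W_max⊥ ⊕ W_max, write the compression of U_W to W_max⊥ in block form with upper-left m×m block A mapping W_max⊥-coordinates to W_max⊥-coordinates. Then the null space of A is {0}; consequently A is invertible. -/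
/-- Let `U` be unitary on `ℂ^N`, `W` a subspace, `U_W = U ∘ P_{Wᗮ}`, and
`W_max = {w : ∃ i, U_W^(i+1) w = 0}` (which equals `W_{d'}` for some `d'`).
Write `Ũ_W = U_W^(d'+1)` and let `A : W_maxᗮ → W_maxᗮ` be the compression of
`Ũ_W` to `W_maxᗮ` (the upper-left block of its block decomposition with respect
to `ℂ^N = W_maxᗮ ⊕ W_max`).  Then the null space of `A` is `{0}`; consequently
`A` is invertible (bijective). -/
theorem compression_block_injective (N : ℕ)
    (U : EuclideanSpace ℂ (Fin N) ≃ₗᵢ[ℂ] EuclideanSpace ℂ (Fin N))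
    (W : Submodule ℂ (EuclideanSpace ℂ (Fin N)))
    (UW : Module.End ℂ (EuclideanSpace ℂ (Fin N)))
    (hUW : ∀ v, UW v = U ((Submodule.orthogonalProjectionOnto Wᗮ v : EuclideanSpace ℂ (Fin N))))
    (Wmax : Submodule ℂ (EuclideanSpace ℂ (Fin N)))
    (hWmax : ∀ w, w ∈ Wmax ↔ ∃ i : ℕ, (UW ^ (i + 1)) w = 0)
    (d' : ℕ) (hd' : ∀ w, w ∈ Wmax ↔ (UW ^ (d' + 1)) w = 0)
    (A : Wmaxᗮ →ₗ[ℂ] Wmaxᗮ)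
    (hA : ∀ x : Wmaxᗮ, (A x : EuclideanSpace ℂ (Fin N)) =
      (Submodule.orthogonalProjectionOnto Wmaxᗮ ((UW ^ (d' + 1)) (x : EuclideanSpace ℂ (Fin N)))
        : EuclideanSpace ℂ (Fin N))) :
    LinearMap.ker A = ⊥ ∧ Function.Bijective A := by
  have hker : LinearMap.ker A = ⊥ := by
    rw [LinearMap.ker_eq_bot']
    intro x hx
    -- y := Ũ x
    set y := (UW ^ (d' + 1)) (x : EuclideanSpace ℂ (Fin N)) with hy
    have hproj : (Submodule.orthogonalProjectionOnto Wmaxᗮ y : EuclideanSpace ℂ (Fin N)) = 0 := by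
      rw [← hA x, hx]; simp
    have hyW : y ∈ Wmax := by
      have : y ∈ Wmaxᗮᗮ := by
        rw [Submodule.mem_orthogonal]
        intro u hu
        have : inner ℂ (y - (Submodule.orthogonalProjectionOnto Wmaxᗮ y : EuclideanSpace ℂ (Fin N))) u = 0 :=
          Submodule.starProjection_inner_eq_zero (K := Wmaxᗮ) y u hu
        have h0 : (Submodule.orthogonalProjectionOnto Wmaxᗮ y : EuclideanSpace ℂ (Fin N)) = 0 := hproj
        rw [h0, sub_zero] at this
        rw [← inner_conj_symm]
        simp [this]
      rwa [Submodule.orthogonal_orthogonal] at this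
    have hy0 : (UW ^ (d' + 1)) y = 0 := (hd' y).mp hyW
    have hx2 : (UW ^ ((2 * d' + 1) + 1)) (x : EuclideanSpace ℂ (Fin N)) = 0 := by
      have : (UW ^ (d' + 1) * UW ^ (d' + 1)) (x : EuclideanSpace ℂ (Fin N)) = 0 := by
        simpa [Module.End.mul_apply] using hy0
      rw [← pow_add] at this
      have heq : d' + 1 + (d' + 1) = 2 * d' + 1 + 1 := by ring
      rwa [heq] at this
    have hxW : (x : EuclideanSpace ℂ (Fin N)) ∈ Wmax := (hWmax _).mpr ⟨2 * d' + 1, hx2⟩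
    have : (x : EuclideanSpace ℂ (Fin N)) ∈ Wmax ⊓ Wmaxᗮ := ⟨hxW, x.2⟩
    rw [Submodule.inf_orthogonal_eq_bot] at this
    exact Subtype.ext (by simpa using this)
  refine ⟨hker, ?_⟩
  have hinj : Function.Injective A := LinearMap.ker_eq_bot.mp hker
  exact ⟨hinj, LinearMap.surjective_of_injective hinj⟩
end

section
/- For binary strings x = x_1…x_n, the product of matrices (0,0,0,1,0)·P_$·P_{x_n}·P_{x_{n−1}}⋯P_{x_1}·P_¢·(1,0,0,0,0)^T equals 0.x_n x_{n−1}…x_1 = ∑_{i=1}^n x_{n+1−i} 2^{−i}, where P_¢, P_0, P_1, P_$ are the explicit 5×5 column-stochastic matrices: P_α = [[A_α, 0],[0, I₂]] for α ∈ {¢,0,1} and P_$ = [[0,0],[B, I₂]], with A_¢ = [[1/(2ε),0,0],[0,0,0],[(2ε−1)/(2ε),1,1]], A_0 = [[1,1/2,0],[0,1/2,0],[0,0,1]], A_1 = [[1/2,0,0],[1/2,1,0],[0,0,1]], B = [[0,1,0],[1,0,1]], for ε = 1/2 (so 1/(2ε) = 1). -/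
/-- `P_¢ = [[A_¢, 0],[0, I₂]]` with `A_¢ = [[1/(2ε),0,0],[0,0,0],[(2ε−1)/(2ε),1,1]]`
for `ε = 1/2`. -/
noncomputable def Pcent : Matrix (Fin 5) (Fin 5) ℝ :=
  !![1, 0, 0, 0, 0;
     0, 0, 0, 0, 0;
     0, 1, 1, 0, 0;
     0, 0, 0, 1, 0;
     0, 0, 0, 0, 1]

/-- `P_0 = [[A_0, 0],[0, I₂]]` with `A_0 = [[1,1/2,0],[0,1/2,0],[0,0,1]]`. -/
noncomputable def Pzero : Matrix (Fin 5) (Fin 5) ℝ :=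
  !![1, 1/2, 0, 0, 0;
     0, 1/2, 0, 0, 0;
     0, 0,   1, 0, 0;
     0, 0,   0, 1, 0;
     0, 0,   0, 0, 1]

/-- `P_1 = [[A_1, 0],[0, I₂]]` with `A_1 = [[1/2,0,0],[1/2,1,0],[0,0,1]]`. -/
noncomputable def Pone : Matrix (Fin 5) (Fin 5) ℝ :=
  !![1/2, 0, 0, 0, 0;
     1/2, 1, 0, 0, 0;
     0,   0, 1, 0, 0;
     0,   0, 0, 1, 0;
     0,   0, 0, 0, 1]

/-- `P_$ = [[0₃ₓ₃, 0₃ₓ₂],[B, I₂]]` with `B = [[0,1,0],[1,0,1]]`. -/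
noncomputable def Pdollar : Matrix (Fin 5) (Fin 5) ℝ :=
  !![0, 0, 0, 0, 0;
     0, 0, 0, 0, 0;
     0, 0, 0, 0, 0;
     0, 1, 0, 1, 0;
     1, 0, 1, 0, 1]

/-- Transition matrix for an input bit. -/
noncomputable def Pbit (b : Bool) : Matrix (Fin 5) (Fin 5) ℝ :=
  if b then Pone else Pzero


noncomputable def sfun : List Bool → ℝ
  | [] => 0
  | b :: l => (if b then 1 else 0) / 2 + sfun l / 2

lemma key (x : List Bool) :
    (x.foldl (fun A b => Pbit b * A) Pcent) 0 0 = 1 - sfun x.reverse ∧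
    (x.foldl (fun A b => Pbit b * A) Pcent) 1 0 = sfun x.reverse ∧
    (x.foldl (fun A b => Pbit b * A) Pcent) 2 0 = 0 ∧
    (x.foldl (fun A b => Pbit b * A) Pcent) 3 0 = 0 ∧
    (x.foldl (fun A b => Pbit b * A) Pcent) 4 0 = 0 := by
  induction x using List.reverseRecOn with
  | nil =>
    refine ⟨?_, ?_, ?_, ?_, ?_⟩ <;> simp [Pcent, sfun]
  | append_singleton l b ih =>
    rw [List.foldl_append, List.foldl_cons, List.foldl_nil]
    generalize hM : l.foldl (fun A b => Pbit b * A) Pcent = M at ih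
    obtain ⟨h0, h1, h2, h3, h4⟩ := ih
    rw [List.reverse_append, List.reverse_singleton, List.singleton_append]
    cases b <;>
      refine ⟨?_, ?_, ?_, ?_, ?_⟩ <;>
      simp [Pbit, Pone, Pzero, Matrix.mul_apply, Fin.sum_univ_five, h0, h1, h2, h3, h4,
        Matrix.vecHead, Matrix.vecTail, sfun] <;>
      ring

lemma sfun_eq (r : List Bool) :
    sfun r = ∑ i ∈ Finset.range r.length,
      (if r.getD i false then (1 : ℝ) else 0) * (1 / 2) ^ (i + 1) := by
  induction r with
  | nil => simp [sfun]
  | cons b l ih =>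
    rw [List.length_cons, Finset.sum_range_succ', sfun, ih]
    simp only [List.getD_cons_succ, List.getD_cons_zero]
    have : (∑ i ∈ Finset.range l.length,
        (if l.getD i false then (1 : ℝ) else 0) * (1 / 2) ^ (i + 1)) / 2 =
        ∑ i ∈ Finset.range l.length,
        (if l.getD i false then (1 : ℝ) else 0) * (1 / 2) ^ (i + 1 + 1) := by
      rw [Finset.sum_div]
      exact Finset.sum_congr rfl fun i _ => by ring
    rw [this]
    ring

/-- For a binary string `x = x_1 … x_n`, the matrix product
`(0,0,0,1,0) · P_$ · P_{x_n} ⋯ P_{x_1} · P_¢ · (1,0,0,0,0)ᵀ` — i.e. the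
`(3,0)`-entry (fourth row, first column) of `P_$ · P_{x_n} ⋯ P_{x_1} · P_¢` —
equals `0.x_n x_{n−1} … x_1 = ∑_{i=1}^n x_{n+1−i} 2^{−i}`. -/
theorem rabin_matrix_product (x : List Bool) :
    (Pdollar * x.foldl (fun A b => Pbit b * A) Pcent) 3 0 =
      ∑ i ∈ Finset.range x.length,
        (if x.getD (x.length - 1 - i) false then (1 : ℝ) else 0) * (1 / 2) ^ (i + 1) := by
  obtain ⟨h0, h1, h2, h3, h4⟩ := key x
  rw [Matrix.mul_apply, Fin.sum_univ_five]
  have hsum : (∑ i ∈ Finset.range x.length,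
      (if x.getD (x.length - 1 - i) false then (1 : ℝ) else 0) * (1 / 2) ^ (i + 1))
      = sfun x.reverse := by
    rw [sfun_eq, List.length_reverse]
    refine Finset.sum_congr rfl fun i hi => ?_
    have hi' : i < x.length := Finset.mem_range.mp hi
    congr 2
    rw [List.getD_eq_getElem _ _ (by omega : x.length - 1 - i < x.length),
      List.getD_eq_getElem _ _ (by simpa using hi'), List.getElem_reverse]
  rw [hsum]
  simp [Pdollar, h1, h3]
end
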